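/- arXiv:1006.3883 — 2 statements merged into one kernel-verified Lean document; each statement's English description precedes it below -/
import Mathlib

section
/- The facets of Δ_{LT(J)} are exactly the sets F = F_x ∪ F_y where F_x is a monotone lattice path from some (i,j) ≠ (m,n) to (m,n) in the x-grid and F_y is a pair of non-intersecting monotone lattice paths from (1,1), (2,1) to (i,n), (m,j) in the y-grid. -/
/-- A single step in a monotone lattice path: one unit down or one unit right. -/
def IsStep (p q : ℕ × ℕ) : Prop := q = (p.1 + 1, p.2) ∨ q = (p.1, p.2 + 1)

/-- `L` is a monotone lattice path from `(a,b)` to `(c,d)`. -/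
def IsPath (a b c d : ℕ) (L : List (ℕ × ℕ)) : Prop :=
  L ≠ [] ∧ L.head? = some (a, b) ∧ L.getLast? = some (c, d) ∧ L.Chain' IsStep

/-- Vertices of the complex: `(true, i, j)` is `x_{i,j}`, `(false, i, j)` is `y_{i,j}`. -/
abbrev V : Type := Bool × ℕ × ℕ

def InGrid (m n : ℕ) (v : V) : Prop :=
  1 ≤ v.2.1 ∧ v.2.1 ≤ m ∧ 1 ≤ v.2.2 ∧ v.2.2 ≤ n

/-- A face of `Δ_{LT(J)}`: a set of vertices in the grid whose squarefree monomial
is divisible by no element of the families A, B, C, D, E. -/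
def IsFace (m n : ℕ) (F : Finset V) : Prop :=
  (∀ v ∈ F, InGrid m n v) ∧
  (∀ i j k l : ℕ, i < j → k < l → ¬((true, i, l) ∈ F ∧ (true, j, k) ∈ F)) ∧
  (∀ i j k l : ℕ, i < j → k < l → ¬((true, i, k) ∈ F ∧ (false, j, l) ∈ F)) ∧
  (∀ i j k p q r : ℕ, i < j → j ≤ k → p < q → q < r →
      ¬((true, k, p) ∈ F ∧ (false, j, q) ∈ F ∧ (false, i, r) ∈ F)) ∧
  (∀ i j k p q r : ℕ, i < j → j < k → p < q → q ≤ r →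
      ¬((true, i, r) ∈ F ∧ (false, j, q) ∈ F ∧ (false, k, p) ∈ F)) ∧
  (∀ i j k p q r : ℕ, i < j → j < k → p < q → q < r →
      ¬((false, i, r) ∈ F ∧ (false, j, q) ∈ F ∧ (false, k, p) ∈ F))

/-- A facet: an inclusion-maximal face. -/
def IsFacet (m n : ℕ) (F : Finset V) : Prop :=
  IsFace m n F ∧ ∀ G : Finset V, IsFace m n G → F ⊆ G → F = G

set_option linter.unusedVariables false
set_option linter.unreachableTactic false
set_option linter.unusedTactic false
set_option maxHeartbeats 1000000

lemma path_main : ∀ (L : List (ℕ × ℕ)) (a b c d : ℕ), IsPath a b c d L →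
    ((a,b) ∈ L ∧ (c,d) ∈ L ∧ a ≤ c ∧ b ≤ d ∧
     (∀ p ∈ L, a ≤ p.1 ∧ b ≤ p.2 ∧ p.1 ≤ c ∧ p.2 ≤ d) ∧
     (∀ p ∈ L, ∀ q ∈ L, (p.1 ≤ q.1 ∧ p.2 ≤ q.2) ∨ (q.1 ≤ p.1 ∧ q.2 ≤ p.2)) ∧
     (∀ s, a+b ≤ s → s ≤ c+d → ∃ p ∈ L, p.1+p.2 = s) ∧
     L.toFinset.card + a + b = c + d + 1) := by
  intro L
  induction L with
  | nil => intro a b c d h; exact absurd rfl h.1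
  | cons p t ih =>
    intro a b c d h
    obtain ⟨hne, hhd, hlast, hch⟩ := h
    have hp : p = (a,b) := by simpa using hhd
    subst hp
    cases t with
    | nil =>
      have hcd : ((a,b) : ℕ × ℕ) = (c,d) := by simpa using hlast
      have hc : a = c := by rw [Prod.ext_iff] at hcd; exact hcd.1
      have hd : b = d := by rw [Prod.ext_iff] at hcd; exact hcd.2
      subst hc; subst hd
      refine ⟨by simp, by simp, le_refl _, le_refl _, ?_, ?_, ?_, by simp; omega⟩
      · intro q hq; simp at hq; subst hq; simp
      · intro q hq r hr; simp at hq hr; subst hq; subst hr; simp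
      · intro s h1 h2
        exact ⟨(a,b), by simp, by omega⟩
    | cons q t' =>
      have hch' : IsStep (a,b) q ∧ List.Chain' IsStep (q :: t') := by
        simp only [List.Chain', List.isChain_cons_cons] at hch; exact hch
      have hstep := hch'.1
      have htail : IsPath q.1 q.2 c d (q :: t') := by
        refine ⟨by simp, ?_, ?_, hch'.2⟩
        · simp
        · rwa [List.getLast?_cons_cons] at hlast
      obtain ⟨hqmem, hcdmem, hqc, hqd, hbd, hcmp, hsum, hcard⟩ := ih q.1 q.2 c d htail
      have hq1 : a ≤ q.1 ∧ b ≤ q.2 ∧ q.1 + q.2 = a + b + 1 := by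
        rcases hstep with h | h <;> rw [h] <;> simp <;> omega
      constructor
      · simp
      refine ⟨by simp [hcdmem], by omega, by omega, ?_, ?_, ?_, ?_⟩
      · intro r hr
        rcases List.mem_cons.mp hr with h | h
        · subst h; simp; omega
        · have := hbd r h; omega
      · intro r hr s hs
        rcases List.mem_cons.mp hr with h | h <;> rcases List.mem_cons.mp hs with h2 | h2
        · subst h; subst h2; left; simp
        · subst h; have := hbd s h2; left; simp; omega
        · subst h2; have := hbd r h; right; simp; omega
        · exact hcmp r h s h2
      · intro s h1 h2
        rcases eq_or_lt_of_le h1 with h | h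
        · exact ⟨(a,b), by simp, by omega⟩
        · obtain ⟨r, hr, hrs⟩ := hsum s (by omega) h2
          exact ⟨r, by simp [hr], hrs⟩
      · rw [List.toFinset_cons, Finset.card_insert_of_notMem, ]
        · omega
        · intro hmem
          rw [List.mem_toFinset] at hmem
          have := hbd _ hmem
          simp at this
          omega

lemma path_start_mem {a b c d : ℕ} {L : List (ℕ × ℕ)} (h : IsPath a b c d L) : (a,b) ∈ L :=
  (path_main L a b c d h).1
lemma path_end_mem {a b c d : ℕ} {L : List (ℕ × ℕ)} (h : IsPath a b c d L) : (c,d) ∈ L :=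
  (path_main L a b c d h).2.1
lemma path_le {a b c d : ℕ} {L : List (ℕ × ℕ)} (h : IsPath a b c d L) : a ≤ c ∧ b ≤ d :=
  ⟨(path_main L a b c d h).2.2.1, (path_main L a b c d h).2.2.2.1⟩
lemma path_bounds {a b c d : ℕ} {L : List (ℕ × ℕ)} (h : IsPath a b c d L) :
    ∀ p ∈ L, a ≤ p.1 ∧ b ≤ p.2 ∧ p.1 ≤ c ∧ p.2 ≤ d :=
  (path_main L a b c d h).2.2.2.2.1
lemma path_cmp {a b c d : ℕ} {L : List (ℕ × ℕ)} (h : IsPath a b c d L) :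
    ∀ p ∈ L, ∀ q ∈ L, (p.1 ≤ q.1 ∧ p.2 ≤ q.2) ∨ (q.1 ≤ p.1 ∧ q.2 ≤ p.2) :=
  (path_main L a b c d h).2.2.2.2.2.1
lemma path_card {a b c d : ℕ} {L : List (ℕ × ℕ)} (h : IsPath a b c d L) :
    L.toFinset.card + a + b = c + d + 1 :=
  (path_main L a b c d h).2.2.2.2.2.2.2

lemma path_no_descend {a b c d : ℕ} {L : List (ℕ × ℕ)} (h : IsPath a b c d L)
    {p q : ℕ × ℕ} (hp : p ∈ L) (hq : q ∈ L) (h1 : p.1 < q.1) (h2 : q.2 < p.2) : False := by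
  rcases path_cmp h p hp q hq with h3 | h3 <;> omega

lemma path_nd {a b c d : ℕ} {L : List (ℕ × ℕ)} (h : IsPath a b c d L)
    {p1 p2 q1 q2 : ℕ} (hp : (p1, p2) ∈ L) (hq : (q1, q2) ∈ L)
    (h1 : p1 < q1) (h2 : q2 < p2) : False := by
  rcases path_cmp h _ hp _ hq with h3 | h3 <;> simp at h3 <;> omega

section FACE
variable {m n a b : ℕ} {Lx P Q : List (ℕ × ℕ)}

lemma rhs_isFace (hm : 2 ≤ m) (hmn : m ≤ n) (ha1 : 1 ≤ a) (ham : a ≤ m)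
    (hb1 : 1 ≤ b) (hbn : b ≤ n)
    (hLx : IsPath a b m n Lx) (hP : IsPath 1 1 a n P) (hQ : IsPath 2 1 m b Q) :
    IsFace m n ((Lx.toFinset.image fun p => ((true, p) : V)) ∪
      ((P.toFinset ∪ Q.toFinset).image fun p => ((false, p) : V))) := by
  set S := (Lx.toFinset.image fun p => ((true, p) : V)) ∪
      ((P.toFinset ∪ Q.toFinset).image fun p => ((false, p) : V)) with hS
  have hx : ∀ p : ℕ × ℕ, ((true, p) : V) ∈ S ↔ p ∈ Lx := by
    intro p; simp [hS, List.mem_toFinset]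
  have hy : ∀ p : ℕ × ℕ, ((false, p) : V) ∈ S ↔ p ∈ P ∨ p ∈ Q := by
    intro p; simp [hS, List.mem_toFinset]
  refine ⟨?_, ?_, ?_, ?_, ?_, ?_⟩
  · rintro ⟨bl, p⟩ hv
    cases bl
    · rcases (hy p).1 hv with h | h
      · have h2 := path_bounds hP p h
        exact ⟨h2.1, le_trans h2.2.2.1 ham, h2.2.1, h2.2.2.2⟩
      · have h2 := path_bounds hQ p h
        exact ⟨le_trans (by omega) h2.1, h2.2.2.1, h2.2.1, le_trans h2.2.2.2 hbn⟩
    · have h := (hx p).1 hv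
      have h2 := path_bounds hLx p h
      exact ⟨le_trans ha1 h2.1, h2.2.2.1, le_trans hb1 h2.2.1, h2.2.2.2⟩
  · intro i j k l hij hkl ⟨h1, h2⟩
    exact path_nd hLx ((hx _).1 h1) ((hx _).1 h2) hij hkl
  · intro i j k l hij hkl ⟨h1, h2⟩
    have hxi := path_bounds hLx _ ((hx _).1 h1)
    simp only at hxi
    rcases (hy _).1 h2 with h | h
    · have h3 := path_bounds hP _ h; simp only at h3; omega
    · have h3 := path_bounds hQ _ h; simp only at h3; omega
  · intro i j k p q r hij hjk hpq hqr ⟨h1, h2, h3⟩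
    have hxk := path_bounds hLx _ ((hx _).1 h1)
    simp only at hxk
    have hjq : ((j, q) : ℕ × ℕ) ∈ P := by
      rcases (hy _).1 h2 with h | h
      · exact h
      · have h4 := path_bounds hQ _ h; simp only at h4; omega
    have hir : ((i, r) : ℕ × ℕ) ∈ P := by
      rcases (hy _).1 h3 with h | h
      · exact h
      · have h4 := path_bounds hQ _ h; simp only at h4; omega
    exact path_nd hP hir hjq hij hqr
  · intro i j k p q r hij hjk hpq hqr ⟨h1, h2, h3⟩
    have hxi := path_bounds hLx _ ((hx _).1 h1)
    simp only at hxi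
    have hjq : ((j, q) : ℕ × ℕ) ∈ Q := by
      rcases (hy _).1 h2 with h | h
      · have h4 := path_bounds hP _ h; simp only at h4; omega
      · exact h
    have hkp : ((k, p) : ℕ × ℕ) ∈ Q := by
      rcases (hy _).1 h3 with h | h
      · have h4 := path_bounds hP _ h; simp only at h4; omega
      · exact h
    exact path_nd hQ hjq hkp hjk hpq
  · intro i j k p q r hij hjk hpq hqr ⟨h1, h2, h3⟩
    rcases (hy _).1 h1 with ha | ha <;> rcases (hy _).1 h2 with hb | hb <;>
      rcases (hy _).1 h3 with hc | hc
    · exact path_nd hP ha hb hij hqr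
    · exact path_nd hP ha hb hij hqr
    · exact path_nd hP ha hc (by omega) (by omega)
    · exact path_nd hQ hb hc hjk hpq
    · exact path_nd hP hb hc hjk hpq
    · exact path_nd hQ ha hc (by omega) (by omega)
    · exact path_nd hQ ha hb hij hqr
    · exact path_nd hQ ha hb hij hqr

lemma rhs_card (hd : ∀ v ∈ P, v ∉ Q)
    (hLx : IsPath a b m n Lx) (hP : IsPath 1 1 a n P) (hQ : IsPath 2 1 m b Q) :
    ((Lx.toFinset.image fun p => ((true, p) : V)) ∪
      ((P.toFinset ∪ Q.toFinset).image fun p => ((false, p) : V))).card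
      = 2 * m + 2 * n - 2 := by
  have hinj1 : Function.Injective (fun p : ℕ × ℕ => ((true, p) : V)) := by
    intro p q h; simpa using h
  have hinj2 : Function.Injective (fun p : ℕ × ℕ => ((false, p) : V)) := by
    intro p q h; simpa using h
  have hdisj : Disjoint (Lx.toFinset.image fun p => ((true, p) : V))
      ((P.toFinset ∪ Q.toFinset).image fun p => ((false, p) : V)) := by
    rw [Finset.disjoint_left]
    intro v hv hv2
    obtain ⟨p, _, hpe⟩ := Finset.mem_image.1 hv
    obtain ⟨q, _, hqe⟩ := Finset.mem_image.1 hv2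
    rw [← hpe] at hqe
    simp at hqe
  have hdisjPQ : Disjoint P.toFinset Q.toFinset := by
    rw [Finset.disjoint_left]
    intro v hv hv2
    rw [List.mem_toFinset] at hv hv2
    exact hd v hv hv2
  rw [Finset.card_union_of_disjoint hdisj, Finset.card_image_of_injective _ hinj1,
    Finset.card_image_of_injective _ hinj2, Finset.card_union_of_disjoint hdisjPQ]
  have c1 := path_card hLx
  have c2 := path_card hP
  have c3 := path_card hQ
  have l1 := path_le hLx
  omega
end FACE

def gt' (s : ℕ) (α : ℕ × ℕ) : ℕ := if α.1 + α.2 ≤ s then α.1 else s - α.2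
def gb' (s : ℕ) (α : ℕ × ℕ) : ℕ := if s ≤ α.1 + α.2 then α.1 else s - α.2

def mkList (f : ℕ → ℕ × ℕ) (σ k : ℕ) : List (ℕ × ℕ) :=
  (List.range (k+1)).map (fun t => f (σ+t))

lemma mkList_mem {f : ℕ → ℕ × ℕ} {σ k : ℕ} {v : ℕ × ℕ} :
    v ∈ mkList f σ k ↔ ∃ t, t ≤ k ∧ v = f (σ+t) := by
  simp [mkList, List.mem_map, Nat.lt_succ_iff]
  constructor
  · rintro ⟨t, ht, he⟩; exact ⟨t, ht, he.symm⟩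
  · rintro ⟨t, ht, he⟩; exact ⟨t, ht, he.symm⟩

lemma mkList_isPath {f : ℕ → ℕ × ℕ} {σ k a b c d : ℕ}
    (hstep : ∀ t, t < k → IsStep (f (σ+t)) (f (σ+t+1)))
    (hh : f σ = (a,b)) (hl : f (σ+k) = (c,d)) : IsPath a b c d (mkList f σ k) := by
  refine ⟨by simp [mkList], ?_, ?_, ?_⟩
  · rw [mkList, List.range_succ_eq_map]
    simp [hh]
  · rw [List.getLast?_eq_getElem?]
    have hlen : (mkList f σ k).length = k + 1 := by simp [mkList]
    rw [hlen]
    simp only [Nat.add_sub_cancel, mkList, List.getElem?_map,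
      List.getElem?_range (Nat.lt_succ_self k)]
    simp [hl]
  · rw [mkList]; simp only [List.Chain', List.isChain_map]
    have := (List.isChain_range_succ (fun a b => IsStep (f (σ+a)) (f (σ+b))) k).2
    apply this
    intro t ht
    exact hstep t ht

section TOP
variable {A : Finset (ℕ × ℕ)} (hA : A.Nonempty)

lemma T_pass (hchain : ∀ p ∈ A, ∀ q ∈ A, (p.1 ≤ q.1 ∧ p.2 ≤ q.2) ∨ (q.1 ≤ p.1 ∧ q.2 ≤ p.2))
    {α : ℕ × ℕ} (hα : α ∈ A) : A.sup' hA (gt' (α.1+α.2)) = α.1 := by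
  apply le_antisymm
  · apply Finset.sup'_le
    intro β hβ
    rcases hchain β hβ α hα with h | h <;> unfold gt' <;> split_ifs <;> omega
  · have h0 : gt' (α.1+α.2) α = α.1 := by unfold gt'; simp
    have h2 := Finset.le_sup' (gt' (α.1+α.2)) hα
    rwa [h0] at h2

lemma T_mono (s : ℕ) : A.sup' hA (gt' s) ≤ A.sup' hA (gt' (s+1)) := by
  apply Finset.sup'_le
  intro β hβ
  refine le_trans ?_ (Finset.le_sup' _ hβ)
  unfold gt'; split_ifs <;> omega

lemma T_step (s : ℕ) : A.sup' hA (gt' (s+1)) ≤ A.sup' hA (gt' s) + 1 := by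
  apply Finset.sup'_le
  intro β hβ
  refine le_trans ?_ (Nat.add_le_add_right (Finset.le_sup' (gt' s) hβ) 1)
  unfold gt'; split_ifs <;> omega

lemma T_down {s : ℕ} (h1 : A.sup' hA (gt' (s+1)) = A.sup' hA (gt' s) + 1)
    (h2 : 1 ≤ A.sup' hA (gt' (s+1))) :
    ∃ α ∈ A, α.2 + A.sup' hA (gt' (s+1)) = s+1 ∧ A.sup' hA (gt' (s+1)) ≤ α.1 := by
  set W1 := A.sup' hA (gt' (s+1)) with hW1
  set W0 := A.sup' hA (gt' s) with hW0
  obtain ⟨α, hαA, heq⟩ := Finset.exists_mem_eq_sup' hA (gt' (s+1))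
  rw [← hW1] at heq
  have hle : gt' s α ≤ W0 := Finset.le_sup' (gt' s) hαA
  refine ⟨α, hαA, ?_⟩
  unfold gt' at heq hle
  split_ifs at heq hle <;> omega
end TOP

section BOT
variable {A : Finset (ℕ × ℕ)} (hA : A.Nonempty)

lemma B_pass (hchain : ∀ p ∈ A, ∀ q ∈ A, (p.1 ≤ q.1 ∧ p.2 ≤ q.2) ∨ (q.1 ≤ p.1 ∧ q.2 ≤ p.2))
    {α : ℕ × ℕ} (hα : α ∈ A) : A.inf' hA (gb' (α.1+α.2)) = α.1 := by
  apply le_antisymm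
  · have h0 : gb' (α.1+α.2) α = α.1 := by unfold gb'; simp
    have h2 := Finset.inf'_le (gb' (α.1+α.2)) hα
    rwa [h0] at h2
  · apply Finset.le_inf'
    intro β hβ
    rcases hchain β hβ α hα with h | h <;> unfold gb' <;> split_ifs <;> omega

lemma B_mono (s : ℕ) : A.inf' hA (gb' s) ≤ A.inf' hA (gb' (s+1)) := by
  apply Finset.le_inf'
  intro β hβ
  refine le_trans (Finset.inf'_le _ hβ) ?_
  unfold gb'; split_ifs <;> omega

lemma B_step (s : ℕ) : A.inf' hA (gb' (s+1)) ≤ A.inf' hA (gb' s) + 1 := by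
  obtain ⟨β, hβA, heq⟩ := Finset.exists_mem_eq_inf' hA (gb' s)
  refine le_trans (Finset.inf'_le (gb' (s+1)) hβA) ?_
  rw [heq]
  unfold gb'; split_ifs <;> omega

lemma B_right {s : ℕ} (h1 : A.inf' hA (gb' (s+1)) = A.inf' hA (gb' s))
    (h2 : 2 ≤ A.inf' hA (gb' s)) :
    ∃ β ∈ A, β.1 = A.inf' hA (gb' (s+1)) ∧ s+1 ≤ β.1 + β.2 := by
  set W1 := A.inf' hA (gb' (s+1)) with hW1
  set W0 := A.inf' hA (gb' s) with hW0
  obtain ⟨β, hβA, heq⟩ := Finset.exists_mem_eq_inf' hA (gb' (s+1))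
  rw [← hW1] at heq
  have hle : W0 ≤ gb' s β := Finset.inf'_le (gb' s) hβA
  refine ⟨β, hβA, ?_⟩
  unfold gb' at heq hle
  split_ifs at heq hle <;> omega
end BOT

lemma mk_step {Lf : ℕ → ℕ} {s : ℕ} (h1 : Lf s ≤ Lf (s+1)) (h2 : Lf (s+1) ≤ Lf s + 1)
    (h3 : Lf s ≤ s) : IsStep (Lf s, s - Lf s) (Lf (s+1), s+1 - Lf (s+1)) := by
  unfold IsStep
  rcases Nat.eq_or_lt_of_le h1 with h | h
  · right; rw [Prod.ext_iff]; constructor <;> simp <;> omega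
  · left; rw [Prod.ext_iff]; constructor <;> simp <;> omega

theorem face_ext {m n : ℕ} (hm : 2 ≤ m) (hmn : m ≤ n) {F : Finset V} (hF : IsFace m n F) :
    ∃ (a b : ℕ) (Lx P Q : List (ℕ × ℕ)),
      1 ≤ a ∧ a ≤ m ∧ 1 ≤ b ∧ b ≤ n ∧ (a, b) ≠ (m, n) ∧
      IsPath a b m n Lx ∧ IsPath 1 1 a n P ∧ IsPath 2 1 m b Q ∧
      (∀ v ∈ P, v ∉ Q) ∧
      F ⊆ (Lx.toFinset.image fun p => ((true, p) : V)) ∪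
            ((P.toFinset ∪ Q.toFinset).image fun p => ((false, p) : V)) := by
  classical
  obtain ⟨hgrid, hA, hB, hC, hD, hE⟩ := hF
  -- the x- and y- position sets
  set Xs := (F.filter (fun v => v.1 = true)).image Prod.snd with hXsdef
  set Ys := (F.filter (fun v => v.1 = false)).image Prod.snd with hYsdef
  have hXmem : ∀ p : ℕ × ℕ, p ∈ Xs ↔ ((true, p) : V) ∈ F := by
    intro p
    simp only [hXsdef, Finset.mem_image, Finset.mem_filter]
    constructor
    · rintro ⟨⟨bl, q⟩, ⟨hmem, hbl⟩, hq⟩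
      simp only at hbl hq
      subst hbl; subst hq; exact hmem
    · intro h; exact ⟨(true, p), ⟨h, rfl⟩, rfl⟩
  have hYmem : ∀ p : ℕ × ℕ, p ∈ Ys ↔ ((false, p) : V) ∈ F := by
    intro p
    simp only [hYsdef, Finset.mem_image, Finset.mem_filter]
    constructor
    · rintro ⟨⟨bl, q⟩, ⟨hmem, hbl⟩, hq⟩
      simp only at hbl hq
      subst hbl; subst hq; exact hmem
    · intro h; exact ⟨(false, p), ⟨h, rfl⟩, rfl⟩
  have hXgrid : ∀ p ∈ Xs, 1 ≤ p.1 ∧ p.1 ≤ m ∧ 1 ≤ p.2 ∧ p.2 ≤ n := by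
    intro p hp; exact hgrid _ ((hXmem p).1 hp)
  have hYgrid : ∀ p ∈ Ys, 1 ≤ p.1 ∧ p.1 ≤ m ∧ 1 ≤ p.2 ∧ p.2 ≤ n := by
    intro p hp; exact hgrid _ ((hYmem p).1 hp)
  have hXchain : ∀ p ∈ Xs, ∀ q ∈ Xs, (p.1 ≤ q.1 ∧ p.2 ≤ q.2) ∨ (q.1 ≤ p.1 ∧ q.2 ≤ p.2) := by
    intro p hp q hq
    by_contra hcon
    have hx1 := (hXmem p).1 hp
    have hx2 := (hXmem q).1 hq
    rcases Nat.lt_or_ge p.1 q.1 with h1 | h1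
    · rcases Nat.lt_or_ge q.2 p.2 with h2 | h2
      · exact hA p.1 q.1 q.2 p.2 h1 h2 ⟨hx1, hx2⟩
      · exact hcon (Or.inl ⟨le_of_lt h1, h2⟩)
    · rcases Nat.lt_or_ge p.2 q.2 with h2 | h2
      · rcases Nat.lt_or_ge q.1 p.1 with h3 | h3
        · exact hA q.1 p.1 p.2 q.2 h3 h2 ⟨hx2, hx1⟩
        · exact hcon (Or.inl ⟨by omega, le_of_lt h2⟩)
      · exact hcon (Or.inr ⟨h1, h2⟩)
  have hYnd : ∀ u ∈ Ys, ∀ v ∈ Ys, ∀ w ∈ Ys,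
      u.1 < v.1 → v.1 < w.1 → w.2 < v.2 → v.2 < u.2 → False := by
    intro u hu v hv w hw h1 h2 h3 h4
    exact hE u.1 v.1 w.1 w.2 v.2 u.2 h1 h2 h3 h4
      ⟨(hYmem u).1 hu, (hYmem v).1 hv, (hYmem w).1 hw⟩
  -- choice of the corner (a,b)
  obtain ⟨a, b, ha1, ham, hb1, hbn, habne, hXlb, F3, F4, F5⟩ :
      ∃ a b : ℕ, 1 ≤ a ∧ a ≤ m ∧ 1 ≤ b ∧ b ≤ n ∧ ¬(a = m ∧ b = n) ∧
        (∀ z ∈ Xs, a ≤ z.1 ∧ b ≤ z.2) ∧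
        (∀ y ∈ Ys, a < y.1 → y.2 ≤ b) ∧
        (∀ y ∈ Ys, (∃ u ∈ Ys, u.1 < y.1 ∧ y.2 < u.2) → y.2 ≤ b) ∧
        (∀ u ∈ Ys, ∀ v ∈ Ys, a < u.1 → u.1 < v.1 → v.2 < u.2 → False) := by
    by_cases hdeg : ∀ z ∈ Xs, z = (m, n)
    · refine ⟨m, n-1, by omega, le_refl m, by omega, by omega, by omega, ?_, ?_, ?_, ?_⟩
      · intro z hz; rw [hdeg z hz]; exact ⟨le_refl m, by omega⟩
      · intro y hy hgt; have := hYgrid y hy; omega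
      · rintro y hy ⟨u, hu, h1, h2⟩; have := hYgrid u hu; omega
      · intro u hu v hv hau huv hvu; have := hYgrid u hu; omega
    · push_neg at hdeg
      obtain ⟨z1, hz1, hz1ne⟩ := hdeg
      obtain ⟨z0, hz0, hz0min⟩ := Finset.exists_min_image Xs (fun p => p.1 + p.2) ⟨z1, hz1⟩
      have hz0le : ∀ z ∈ Xs, z0.1 ≤ z.1 ∧ z0.2 ≤ z.2 := by
        intro z hz
        have hs := hz0min z hz
        rcases hXchain z0 hz0 z hz with h | h
        · exact h
        · omega
      have hg0 := hXgrid z0 hz0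
      have hz0x := (hXmem z0).1 hz0
      refine ⟨z0.1, z0.2, by omega, by omega, by omega, by omega, ?_, hz0le, ?_, ?_, ?_⟩
      · rintro ⟨h1, h2⟩
        apply hz1ne
        have := hz0le z1 hz1
        have hg1 := hXgrid z1 hz1
        rw [Prod.ext_iff]; constructor <;> omega
      · -- F3 from B
        intro y hy hgt
        by_contra hcol
        exact hB z0.1 y.1 z0.2 y.2 hgt (by omega) ⟨hz0x, (hYmem y).1 hy⟩
      · -- F4 from C (or F3)
        rintro y hy ⟨u, hu, hu1, hu2⟩
        rcases Nat.lt_or_ge z0.1 y.1 with hcase | hcase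
        · by_contra hcol
          exact hB z0.1 y.1 z0.2 y.2 hcase (by omega) ⟨hz0x, (hYmem y).1 hy⟩
        · by_contra hcol
          exact hC u.1 y.1 z0.1 z0.2 y.2 u.2 hu1 hcase (by omega) hu2
            ⟨hz0x, (hYmem y).1 hy, (hYmem u).1 hu⟩
      · -- F5 from D and B
        intro u hu v hv hau huv hvu
        have hub : u.2 ≤ z0.2 := by
          by_contra hcol
          exact hB z0.1 u.1 z0.2 u.2 hau (by omega) ⟨hz0x, (hYmem u).1 hu⟩
        exact hD z0.1 u.1 v.1 v.2 u.2 z0.2 hau huv hvu hub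
          ⟨hz0x, (hYmem u).1 hu, (hYmem v).1 hv⟩
  -- the bottom path anchors
  set QB := (Ys.filter (fun y => a < y.1 ∨ ∃ u ∈ Ys, u.1 < y.1 ∧ y.2 < u.2)) ∪
      {(2,1),(m,b)} with hQBdef
  have hQBmem : ∀ β : ℕ × ℕ, β ∈ QB ↔
      ((β ∈ Ys ∧ (a < β.1 ∨ ∃ u ∈ Ys, u.1 < β.1 ∧ β.2 < u.2)) ∨ β = (2,1) ∨ β = (m,b)) := by
    intro β
    simp only [hQBdef, Finset.mem_union, Finset.mem_filter, Finset.mem_insert,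
      Finset.mem_singleton]
    try tauto
  have hQB21 : ((2,1) : ℕ × ℕ) ∈ QB := (hQBmem _).2 (Or.inr (Or.inl rfl))
  have hQBmb : ((m,b) : ℕ × ℕ) ∈ QB := (hQBmem _).2 (Or.inr (Or.inr rfl))
  have hQBne : QB.Nonempty := ⟨(2,1), hQB21⟩
  have hQBbound : ∀ β ∈ QB, 2 ≤ β.1 ∧ β.1 ≤ m ∧ 1 ≤ β.2 ∧ β.2 ≤ b := by
    intro β hβ
    rcases (hQBmem β).1 hβ with ⟨hY, hcase⟩ | h | h
    · have hg := hYgrid β hY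
      have h2 : 2 ≤ β.1 := by
        rcases hcase with h | ⟨u, hu, h1, _⟩
        · omega
        · have := hYgrid u hu; omega
      have hcb : β.2 ≤ b := by
        rcases hcase with h | h
        · exact F3 β hY h
        · exact F4 β hY h
      exact ⟨h2, hg.2.1, hg.2.2.1, hcb⟩
    · subst h; exact ⟨le_refl 2, hm, le_refl 1, hb1⟩
    · subst h; exact ⟨hm, le_refl m, hb1, le_refl b⟩
  have hQBchain : ∀ p ∈ QB, ∀ q ∈ QB, (p.1 ≤ q.1 ∧ p.2 ≤ q.2) ∨ (q.1 ≤ p.1 ∧ q.2 ≤ p.2) := by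
    have key : ∀ p ∈ QB, ∀ q ∈ QB, p.1 < q.1 → q.2 < p.2 → False := by
      intro p hp q hq h1 h2
      rcases (hQBmem q).1 hq with ⟨hYq, hcaseq⟩ | h | h
      · -- q ∈ Ys; find that p is also a Ys-source or endpoint
        rcases (hQBmem p).1 hp with ⟨hYp, hcasep⟩ | h' | h'
        · rcases hcasep with hap | ⟨t, ht, ht1, ht2⟩
          · exact F5 p hYp q hYq hap h1 h2
          · exact hYnd t ht p hYp q hYq ht1 h1 h2 ht2
        · subst h'
          have hb2 := hQBbound q hq
          have h2' : q.2 < 1 := h2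
          omega
        · subst h'
          have hb2 := hQBbound q hq
          have h1' : m < q.1 := h1
          omega
      · subst h
        have hb2 := hQBbound p hp
        have h2' : 1 < p.2 := h2
        have h1' : p.1 < 2 := h1
        omega
      · subst h
        have hb2 := hQBbound p hp
        have h1' : p.1 < m := h1
        have h2' : b < p.2 := h2
        omega
    intro p hp q hq
    rcases Nat.lt_or_ge p.1 q.1 with h1 | h1
    · rcases Nat.lt_or_ge q.2 p.2 with h2 | h2
      · exact absurd (key p hp q hq h1 h2) (by simp)
      · exact Or.inl ⟨le_of_lt h1, h2⟩
    · rcases Nat.lt_or_ge p.2 q.2 with h2 | h2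
      · rcases Nat.lt_or_ge q.1 p.1 with h3 | h3
        · exact absurd (key q hq p hp h3 h2) (by simp)
        · exact Or.inl ⟨by omega, le_of_lt h2⟩
      · exact Or.inr ⟨h1, h2⟩
  -- the bottom path
  set U := fun s => QB.inf' hQBne (gb' s) with hUdef
  have hU3 : U 3 = 2 := by
    have := B_pass hQBne hQBchain hQB21
    simpa using this
  have hUmb : U (m+b) = m := by
    have := B_pass hQBne hQBchain hQBmb
    simpa using this
  have hUrow : ∀ s, 2 ≤ U s := by
    intro s
    apply Finset.le_inf'
    intro β hβ
    have := hQBbound β hβ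
    unfold gb'; split_ifs <;> omega
  have hUcol : ∀ s, 3 ≤ s → U s + 1 ≤ s := by
    intro s hs
    have h : U s ≤ gb' s (2,1) := Finset.inf'_le _ hQB21
    unfold gb' at h
    have h' : U s ≤ if s ≤ 3 then 2 else s - 1 := h
    split_ifs at h' <;> omega
  have hUcolb : ∀ s, s ≤ U s + b := by
    intro s
    have : s - b ≤ U s := by
      apply Finset.le_inf'
      intro β hβ
      have := hQBbound β hβ
      unfold gb'; split_ifs <;> omega
    omega
  set LQ := mkList (fun s => (U s, s - U s)) 3 (m+b-3) with hLQdef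
  have hLQpath : IsPath 2 1 m b LQ := by
    apply mkList_isPath
    · intro t ht
      have h3t : 3 ≤ 3 + t := by omega
      exact mk_step (B_mono hQBne (3+t)) (B_step hQBne (3+t)) (by have := hUcol (3+t) h3t; omega)
    · show (U 3, 3 - U 3) = ((2:ℕ), (1:ℕ))
      rw [hU3]
    · show (U (3+(m+b-3)), (3+(m+b-3)) - U (3+(m+b-3))) = ((m:ℕ), (b:ℕ))
      rw [show 3 + (m+b-3) = m+b by omega, hUmb]
      rw [Prod.ext_iff]
      exact ⟨rfl, by omega⟩
  have hLQmem : ∀ v : ℕ × ℕ, v ∈ LQ ↔ ∃ s, 3 ≤ s ∧ s ≤ m+b ∧ v = (U s, s - U s) := by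
    intro v
    rw [hLQdef, mkList_mem]
    constructor
    · rintro ⟨t, ht, he⟩
      exact ⟨3+t, by omega, by omega, he⟩
    · rintro ⟨s, hs1, hs2, he⟩
      exact ⟨s-3, by omega, by rw [show 3+(s-3) = s by omega]; exact he⟩
  have hQsum : ∀ v ∈ LQ, 3 ≤ v.1 + v.2 ∧ v.1 + v.2 ≤ m+b ∧ v = (U (v.1+v.2), (v.1+v.2) - U (v.1+v.2)) := by
    intro v hv
    obtain ⟨s, hs1, hs2, he⟩ := (hLQmem v).1 hv
    have hsum : v.1 + v.2 = s := by
      rw [he]; simp only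
      have := hUcol s hs1
      omega
    rw [hsum]; exact ⟨hs1, hs2, he⟩
  have hQanchor : ∀ β ∈ QB, β ∈ LQ := by
    intro β hβ
    have hb' := hQBbound β hβ
    have hp : U (β.1 + β.2) = β.1 := B_pass hQBne hQBchain hβ
    apply (hLQmem β).2
    refine ⟨β.1 + β.2, by omega, by omega, ?_⟩
    rw [hp, Prod.ext_iff]
    constructor <;> simp <;> omega
  -- points (c,1) with c ≥ 2 always lie on the bottom path
  have hcol1 : ∀ c, 2 ≤ c → ((c:ℕ),(1:ℕ)) ∈ Ys → ((c:ℕ),(1:ℕ)) ∈ LQ := by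
    intro c hc hmem
    by_cases hpred : ∃ u ∈ Ys, u.1 < c ∧ 1 < u.2
    · apply hQanchor
      apply (hQBmem _).2
      exact Or.inl ⟨hmem, Or.inr hpred⟩
    · push_neg at hpred
      have hcm : c ≤ m := (hYgrid _ hmem).2.1
      have hU : U (c+1) = c := by
        apply le_antisymm
        · have h : U (c+1) ≤ gb' (c+1) (2,1) := Finset.inf'_le _ hQB21
          refine le_trans h ?_
          have : gb' (c+1) (2,1) = if c+1 ≤ 3 then 2 else c + 1 - 1 := rfl
          rw [this]
          split_ifs <;> omega
        · apply Finset.le_inf'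
          intro β hβ
          rcases (hQBmem β).1 hβ with ⟨hY, _⟩ | h | h
          · have hg := hYgrid β hY
            by_cases hβc : β.1 < c
            · have hcol := hpred β hY hβc
              unfold gb'; split_ifs <;> omega
            · unfold gb'; split_ifs <;> omega
          · subst h
            show c ≤ if c+1 ≤ 2+1 then 2 else c+1-1
            split_ifs <;> omega
          · subst h
            show c ≤ if c+1 ≤ m+b then m else c+1-b
            split_ifs <;> omega
      apply (hLQmem _).2
      refine ⟨c+1, by omega, by omega, ?_⟩
      rw [hU, Prod.ext_iff]
      constructor <;> simp
  -- the top path anchors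
  set PA := (Ys.filter (fun y => y ∉ LQ)) ∪ {(1,1),(a,n)} with hPAdef
  have hPAmem : ∀ α : ℕ × ℕ, α ∈ PA ↔
      ((α ∈ Ys ∧ α ∉ LQ) ∨ α = (1,1) ∨ α = (a,n)) := by
    intro α
    simp only [hPAdef, Finset.mem_union, Finset.mem_filter, Finset.mem_insert,
      Finset.mem_singleton]
    try tauto
  have hPA11 : ((1,1) : ℕ × ℕ) ∈ PA := (hPAmem _).2 (Or.inr (Or.inl rfl))
  have hPAan : ((a,n) : ℕ × ℕ) ∈ PA := (hPAmem _).2 (Or.inr (Or.inr rfl))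
  have hPAne : PA.Nonempty := ⟨(1,1), hPA11⟩
  have hPAbound : ∀ α ∈ PA, 1 ≤ α.1 ∧ α.1 ≤ a ∧ 1 ≤ α.2 ∧ α.2 ≤ n := by
    intro α hα
    rcases (hPAmem α).1 hα with ⟨hY, hnot⟩ | h | h
    · have hg := hYgrid α hY
      have hle : α.1 ≤ a := by
        by_contra hgt
        exact hnot (hQanchor α ((hQBmem α).2 (Or.inl ⟨hY, Or.inl (by omega)⟩)))
      exact ⟨hg.1, hle, hg.2.2.1, hg.2.2.2⟩
    · subst h; exact ⟨le_refl 1, ha1, le_refl 1, by omega⟩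
    · subst h; exact ⟨ha1, le_refl a, by omega, le_refl n⟩
  have hPAcol1 : ∀ α ∈ PA, α.2 = 1 → α.1 = 1 := by
    intro α hα h2
    rcases (hPAmem α).1 hα with ⟨hY, hnot⟩ | h | h
    · by_contra hne
      have hg := hYgrid α hY
      have hα2 : 2 ≤ α.1 := by omega
      have heq : (α.1, (1:ℕ)) = α := by rw [Prod.ext_iff]; exact ⟨rfl, h2.symm⟩
      apply hnot
      rw [← heq]
      exact hcol1 α.1 hα2 (by rw [heq]; exact hY)
    · rw [h]
    · exfalso
      have : α.2 = n := by rw [h]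
      omega
  have hPAchain : ∀ p ∈ PA, ∀ q ∈ PA, (p.1 ≤ q.1 ∧ p.2 ≤ q.2) ∨ (q.1 ≤ p.1 ∧ q.2 ≤ p.2) := by
    have key : ∀ p ∈ PA, ∀ q ∈ PA, p.1 < q.1 → q.2 < p.2 → False := by
      intro p hp q hq h1 h2
      rcases (hPAmem q).1 hq with ⟨hYq, hnotq⟩ | h | h
      · rcases (hPAmem p).1 hp with ⟨hYp, _⟩ | h' | h'
        · exact hnotq (hQanchor q ((hQBmem q).2 (Or.inl ⟨hYq, Or.inr ⟨p, hYp, h1, h2⟩⟩)))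
        · subst h'
          have hg := hYgrid q hYq
          have h2' : q.2 < 1 := h2
          omega
        · subst h'
          have hb' := hPAbound q hq
          have h1' : a < q.1 := h1
          omega
      · subst h
        have hb' := hPAbound p hp
        have h1' : p.1 < 1 := h1
        omega
      · subst h
        have hb' := hPAbound p hp
        have h2' : n < p.2 := h2
        omega
    intro p hp q hq
    rcases Nat.lt_or_ge p.1 q.1 with h1 | h1
    · rcases Nat.lt_or_ge q.2 p.2 with h2 | h2
      · exact absurd (key p hp q hq h1 h2) (by simp)
      · exact Or.inl ⟨le_of_lt h1, h2⟩
    · rcases Nat.lt_or_ge p.2 q.2 with h2 | h2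
      · rcases Nat.lt_or_ge q.1 p.1 with h3 | h3
        · exact absurd (key q hq p hp h3 h2) (by simp)
        · exact Or.inl ⟨by omega, le_of_lt h2⟩
      · exact Or.inr ⟨h1, h2⟩
  -- the top path
  set Lt := fun s => PA.sup' hPAne (gt' s) with hLtdef
  have hL2 : Lt 2 = 1 := by
    have := T_pass hPAne hPAchain hPA11
    simpa using this
  have hLan : Lt (a+n) = a := by
    have := T_pass hPAne hPAchain hPAan
    simpa using this
  have hLub : ∀ s, Lt s ≤ a := by
    intro s
    apply Finset.sup'_le
    intro α hα
    have := hPAbound α hα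
    unfold gt'; split_ifs <;> omega
  have hLrow1 : ∀ s, 2 ≤ s → 1 ≤ Lt s := by
    intro s hs
    have h : gt' s (1,1) ≤ Lt s := Finset.le_sup' _ hPA11
    refine le_trans ?_ h
    show 1 ≤ if 1+1 ≤ s then 1 else s - 1
    split_ifs <;> omega
  have hLcol : ∀ s, 2 ≤ s → Lt s + 1 ≤ s := by
    intro s hs
    have h : Lt s ≤ s - 1 := by
      apply Finset.sup'_le
      intro α hα
      have := hPAbound α hα
      unfold gt'; split_ifs <;> omega
    omega
  have hLcoln : ∀ s, s ≤ a+n → s ≤ Lt s + n := by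
    intro s hs
    have h : gt' s (a,n) ≤ Lt s := Finset.le_sup' _ hPAan
    have h2 : s - n ≤ gt' s (a,n) := by
      show s - n ≤ if a+n ≤ s then a else s - n
      split_ifs <;> omega
    omega
  set LP := mkList (fun s => (Lt s, s - Lt s)) 2 (a+n-2) with hLPdef
  have hLPpath : IsPath 1 1 a n LP := by
    apply mkList_isPath
    · intro t ht
      have h2t : 2 ≤ 2 + t := by omega
      exact mk_step (T_mono hPAne (2+t)) (T_step hPAne (2+t))
        (by have := hLcol (2+t) h2t; omega)
    · show (Lt 2, 2 - Lt 2) = ((1:ℕ), (1:ℕ))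
      rw [hL2]
    · show (Lt (2+(a+n-2)), (2+(a+n-2)) - Lt (2+(a+n-2))) = ((a:ℕ), (n:ℕ))
      rw [show 2 + (a+n-2) = a+n by omega, hLan]
      rw [Prod.ext_iff]
      exact ⟨rfl, by omega⟩
  have hLPmem : ∀ v : ℕ × ℕ, v ∈ LP ↔ ∃ s, 2 ≤ s ∧ s ≤ a+n ∧ v = (Lt s, s - Lt s) := by
    intro v
    rw [hLPdef, mkList_mem]
    constructor
    · rintro ⟨t, ht, he⟩
      exact ⟨2+t, by omega, by omega, he⟩
    · rintro ⟨s, hs1, hs2, he⟩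
      exact ⟨s-2, by omega, by rw [show 2+(s-2) = s by omega]; exact he⟩
  have hPanchor : ∀ α ∈ PA, α ∈ LP := by
    intro α hα
    have hb' := hPAbound α hα
    have hp : Lt (α.1 + α.2) = α.1 := T_pass hPAne hPAchain hα
    apply (hLPmem α).2
    refine ⟨α.1 + α.2, by omega, by omega, ?_⟩
    rw [hp, Prod.ext_iff]
    constructor <;> simp <;> omega
  -- separation of the two paths
  have hsep : ∀ s, 3 ≤ s → s ≤ a+n → s ≤ m+b → Lt s < U s := by
    intro s hs3
    induction s, hs3 using Nat.le_induction with
    | base =>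
      intro _ _
      rw [hU3]
      have h : Lt 3 ≤ 1 := by
        apply Finset.sup'_le
        intro α hα
        have hb' := hPAbound α hα
        by_cases h2 : α.2 = 1
        · have h1 := hPAcol1 α hα h2
          unfold gt'; split_ifs <;> omega
        · unfold gt'; split_ifs <;> omega
      omega
    | succ s hs ih =>
      intro h1 h2
      have ihs := ih (by omega) (by omega)
      by_contra hcon
      push_neg at hcon
      have tm : Lt s ≤ Lt (s+1) := T_mono hPAne s
      have ts : Lt (s+1) ≤ Lt s + 1 := T_step hPAne s
      have bm : U s ≤ U (s+1) := B_mono hQBne s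
      have bs : U (s+1) ≤ U s + 1 := B_step hQBne s
      have hLeq : Lt (s+1) = Lt s + 1 := by omega
      have hUeq : U (s+1) = U s := by omega
      have hw : Lt (s+1) = U (s+1) := by omega
      obtain ⟨α, hαPA, hα2, hα1⟩ := T_down hPAne hLeq (hLrow1 (s+1) (by omega))
      obtain ⟨β, hβQB, hβ1, hβs⟩ := B_right hQBne hUeq (hUrow s)
      have hα2' : α.2 + Lt (s+1) = s+1 := hα2
      have hα1' : Lt (s+1) ≤ α.1 := hα1
      have hβ1' : β.1 = U (s+1) := hβ1
      have hwQ : ((U (s+1)), (s+1) - U (s+1)) ∈ LQ :=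
        (hLQmem _).2 ⟨s+1, by omega, by omega, rfl⟩
      have hw2 : 2 ≤ U (s+1) := hUrow (s+1)
      by_cases hc1 : α.1 = Lt (s+1)
      · have hαeq : α = ((U (s+1)), (s+1) - U (s+1)) := by
          rw [Prod.ext_iff]
          constructor
          · simp; omega
          · simp; omega
        rcases (hPAmem α).1 hαPA with ⟨hY, hnot⟩ | h | h
        · exact hnot (hαeq ▸ hwQ)
        · have h1' : α.1 = 1 := by rw [h]
          omega
        · have han1 : α.1 = a := by rw [h]
          have han2 : α.2 = n := by rw [h]
          have hβb := hQBbound β hβQB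
          have hβ2n : β.2 = n := by omega
          rcases (hQBmem β).1 hβQB with ⟨hYβ, hcase⟩ | hh | hh
          · rcases hcase with hgt | ⟨u, hu, hu1, hu2⟩
            · omega
            · have := hYgrid u hu; omega
          · have : β.2 = 1 := by rw [hh]
            omega
          · have hhm : β.1 = m := by rw [hh]
            have hhb : β.2 = b := by rw [hh]
            exact habne ⟨by omega, by omega⟩
      · have hc1' : Lt (s+1) < α.1 := lt_of_le_of_ne hα1' (Ne.symm hc1)
        by_cases hc2 : β.2 + Lt (s+1) = s+1
        · rcases (hQBmem β).1 hβQB with ⟨hYβ, hcase⟩ | hh | hh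
          · rcases hcase with hgt | ⟨u, hu, hu1, hu2⟩
            · have := hPAbound α hαPA; omega
            · have hu1' : u.1 < α.1 := by omega
              have hu2' : α.2 < u.2 := by omega
              rcases (hPAmem α).1 hαPA with ⟨hYα, hnotα⟩ | h | h
              · exact hnotα (hQanchor α ((hQBmem α).2 (Or.inl ⟨hYα, Or.inr ⟨u, hu, hu1', hu2'⟩⟩)))
              · have : α.1 = 1 := by rw [h]
                omega
              · have hgu := hYgrid u hu
                have : α.2 = n := by rw [h]
                omega
          · have hb2 : β.2 = 1 := by rw [hh]
            have hb1' : β.1 = 2 := by rw [hh]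
            omega
          · have hbm : β.1 = m := by rw [hh]
            have := hPAbound α hαPA
            omega
        · have hβ2gt : α.2 < β.2 := by omega
          rcases (hPAmem α).1 hαPA with ⟨hYα, hnotα⟩ | h | h
          · rcases (hQBmem β).1 hβQB with ⟨hYβ, _⟩ | hh | hh
            · exact hnotα (hQanchor α ((hQBmem α).2
                (Or.inl ⟨hYα, Or.inr ⟨β, hYβ, by omega, hβ2gt⟩⟩)))
            · have : β.2 = 1 := by rw [hh]
              have := hPAbound α hαPA
              omega
            · have : β.1 = m := by rw [hh]
              have := hPAbound α hαPA
              omega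
          · have : α.1 = 1 := by rw [h]
            omega
          · have hα2n : α.2 = n := by rw [h]
            have hβb := hQBbound β hβQB
            omega
  -- the two paths are disjoint
  have hdisj : ∀ v ∈ LP, v ∉ LQ := by
    intro v hv hv2
    obtain ⟨s, hs2, hsan, hev⟩ := (hLPmem v).1 hv
    obtain ⟨s', hs3, hsmb, hev'⟩ := (hLQmem v).1 hv2
    have hc1 := hLcol s hs2
    have hc2 := hUcol s' hs3
    have hv11 : v.1 = Lt s := by rw [hev]
    have hv12 : v.2 = s - Lt s := by rw [hev]
    have hv21 : v.1 = U s' := by rw [hev']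
    have hv22 : v.2 = s' - U s' := by rw [hev']
    have hss : s = s' := by omega
    subst hss
    have := hsep s (by omega) hsan (by omega)
    omega
  -- the x-path
  set XA := Xs ∪ {((a,b) : ℕ × ℕ), (m,n)} with hXAdef
  have hXAmem : ∀ γ : ℕ × ℕ, γ ∈ XA ↔ (γ ∈ Xs ∨ γ = (a,b) ∨ γ = (m,n)) := by
    intro γ
    simp only [hXAdef, Finset.mem_union, Finset.mem_insert, Finset.mem_singleton]
  have hXAab : ((a,b) : ℕ × ℕ) ∈ XA := (hXAmem _).2 (Or.inr (Or.inl rfl))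
  have hXAmn : ((m,n) : ℕ × ℕ) ∈ XA := (hXAmem _).2 (Or.inr (Or.inr rfl))
  have hXAne : XA.Nonempty := ⟨(a,b), hXAab⟩
  have hXAbound : ∀ γ ∈ XA, a ≤ γ.1 ∧ γ.1 ≤ m ∧ b ≤ γ.2 ∧ γ.2 ≤ n := by
    intro γ hγ
    rcases (hXAmem γ).1 hγ with h | h | h
    · have h1 := hXlb γ h
      have h2 := hXgrid γ h
      exact ⟨h1.1, h2.2.1, h1.2, h2.2.2.2⟩
    · subst h; exact ⟨le_refl a, ham, le_refl b, hbn⟩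
    · subst h; exact ⟨ham, le_refl m, hbn, le_refl n⟩
  have hXAchain : ∀ p ∈ XA, ∀ q ∈ XA, (p.1 ≤ q.1 ∧ p.2 ≤ q.2) ∨ (q.1 ≤ p.1 ∧ q.2 ≤ p.2) := by
    intro p hp q hq
    rcases (hXAmem p).1 hp with h | h | h
    · rcases (hXAmem q).1 hq with h' | h' | h'
      · exact hXchain p h q h'
      · subst h'
        have := hXlb p h
        exact Or.inr ⟨this.1, this.2⟩
      · subst h'
        have := hXgrid p h
        exact Or.inl ⟨this.2.1, this.2.2.2⟩
    · subst h
      have := hXAbound q hq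
      exact Or.inl ⟨this.1, this.2.2.1⟩
    · subst h
      have := hXAbound q hq
      exact Or.inr ⟨this.2.1, this.2.2.2⟩
  set Lx' := fun s => XA.sup' hXAne (gt' s) with hLxdef
  have hXab : Lx' (a+b) = a := by
    have := T_pass hXAne hXAchain hXAab
    simpa using this
  have hXmn2 : Lx' (m+n) = m := by
    have := T_pass hXAne hXAchain hXAmn
    simpa using this
  have hXcol : ∀ s, a+b ≤ s → Lx' s + b ≤ s := by
    intro s hs
    have h : Lx' s ≤ s - b := by
      apply Finset.sup'_le
      intro γ hγ
      have := hXAbound γ hγ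
      unfold gt'; split_ifs <;> omega
    omega
  set LX := mkList (fun s => (Lx' s, s - Lx' s)) (a+b) (m+n-(a+b)) with hLXdef
  have hLXpath : IsPath a b m n LX := by
    apply mkList_isPath
    · intro t ht
      have hst : a+b ≤ a+b+t := by omega
      exact mk_step (T_mono hXAne (a+b+t)) (T_step hXAne (a+b+t))
        (by have := hXcol (a+b+t) hst; omega)
    · show (Lx' (a+b), (a+b) - Lx' (a+b)) = ((a:ℕ), (b:ℕ))
      rw [hXab, Prod.ext_iff]
      exact ⟨rfl, by omega⟩
    · show (Lx' ((a+b)+(m+n-(a+b))), ((a+b)+(m+n-(a+b))) - Lx' ((a+b)+(m+n-(a+b)))) = ((m:ℕ), (n:ℕ))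
      rw [show (a+b)+(m+n-(a+b)) = m+n by omega, hXmn2, Prod.ext_iff]
      exact ⟨rfl, by omega⟩
  have hXanchor : ∀ z ∈ Xs, z ∈ LX := by
    intro z hz
    have hb' := hXAbound z ((hXAmem z).2 (Or.inl hz))
    have hp : Lx' (z.1 + z.2) = z.1 := T_pass hXAne hXAchain ((hXAmem z).2 (Or.inl hz))
    rw [hLXdef, mkList_mem]
    refine ⟨z.1 + z.2 - (a+b), by omega, ?_⟩
    rw [show (a+b) + (z.1+z.2-(a+b)) = z.1+z.2 by omega, hp, Prod.ext_iff]
    constructor <;> simp <;> omega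
  -- assemble
  refine ⟨a, b, LX, LP, LQ, ha1, ham, hb1, hbn, ?_, hLXpath, hLPpath, hLQpath, hdisj, ?_⟩
  · intro h
    rw [Prod.ext_iff] at h
    exact habne ⟨h.1, h.2⟩
  · rintro ⟨bl, p⟩ hv
    rw [Finset.mem_union]
    cases bl
    · right
      rw [Finset.mem_image]
      refine ⟨p, ?_, rfl⟩
      rw [Finset.mem_union, List.mem_toFinset, List.mem_toFinset]
      have hpY : p ∈ Ys := (hYmem p).2 hv
      by_cases hq : p ∈ LQ
      · exact Or.inr hq
      · exact Or.inl (hPanchor p ((hPAmem p).2 (Or.inl ⟨hpY, hq⟩)))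
    · left
      rw [Finset.mem_image]
      exact ⟨p, List.mem_toFinset.2 (hXanchor p ((hXmem p).2 hv)), rfl⟩


theorem facet_characterization (m n : ℕ) (hm : 2 ≤ m) (hmn : m ≤ n) (F : Finset V) :
    IsFacet m n F ↔
      ∃ (i j : ℕ) (Lx P Q : List (ℕ × ℕ)),
        1 ≤ i ∧ i ≤ m ∧ 1 ≤ j ∧ j ≤ n ∧ (i, j) ≠ (m, n) ∧
        IsPath i j m n Lx ∧ IsPath 1 1 i n P ∧ IsPath 2 1 m j Q ∧
        (∀ v ∈ P, v ∉ Q) ∧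
        F = (Lx.toFinset.image fun p => ((true, p) : V)) ∪
              ((P.toFinset ∪ Q.toFinset).image fun p => ((false, p) : V)) := by
  constructor
  · intro hFacet
    obtain ⟨a, b, Lx, P, Q, h1, h2, h3, h4, h5, h6, h7, h8, h9, hsub⟩ :=
      face_ext hm hmn hFacet.1
    refine ⟨a, b, Lx, P, Q, h1, h2, h3, h4, h5, h6, h7, h8, h9, ?_⟩
    exact hFacet.2 _ (rhs_isFace hm hmn h1 h2 h3 h4 h6 h7 h8) hsub
  · rintro ⟨a, b, Lx, P, Q, h1, h2, h3, h4, h5, h6, h7, h8, h9, hFe⟩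
    subst hFe
    refine ⟨rhs_isFace hm hmn h1 h2 h3 h4 h6 h7 h8, ?_⟩
    intro G hG hsub
    obtain ⟨a', b', Lx', P', Q', g1, g2, g3, g4, g5, g6, g7, g8, g9, hsub'⟩ :=
      face_ext hm hmn hG
    have hcard1 := rhs_card h9 h6 h7 h8
    have hcard2 := rhs_card g9 g6 g7 g8
    have hFS := Finset.Subset.trans hsub hsub'
    have heq := Finset.eq_of_subset_of_card_le hFS (by rw [hcard1, hcard2])
    apply Finset.Subset.antisymm hsub
    rw [heq]
    exact hsub'
end

section
/- Let Δ₂ be the simplicial complex on vertices {w_{i,j} : 1 ≤ i ≤ m, 1 ≤ j ≤ n} whose faces are sets containing no pair w_{i,l}, w_{j,k} with i < j and k < l. Then the facets of Δ₂ are exactly the monotone lattice paths from (1,1) to (m,n), and Δ₂ is pure of dimension m+n-2. -/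
/-- A face of `Δ₂`: a set of grid positions with no strictly south-west pair. -/
def IsFace2 (m n : ℕ) (F : Finset (ℕ × ℕ)) : Prop :=
  (∀ v ∈ F, 1 ≤ v.1 ∧ v.1 ≤ m ∧ 1 ≤ v.2 ∧ v.2 ≤ n) ∧
  ∀ p ∈ F, ∀ q ∈ F, ¬(p.1 < q.1 ∧ q.2 < p.2)

def IsFacet2 (m n : ℕ) (F : Finset (ℕ × ℕ)) : Prop :=
  IsFace2 m n F ∧ ∀ G : Finset (ℕ × ℕ), IsFace2 m n G → F ⊆ G → F = G

/- ## Auxiliary lemmas -/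

lemma step_le {p q : ℕ × ℕ} (h : IsStep p q) : p ≤ q := by
  rcases h with h | h <;> subst h <;> simp [Prod.le_def]

lemma step_sum {p q : ℕ × ℕ} (h : IsStep p q) : p.1 + p.2 + 1 = q.1 + q.2 := by
  rcases h with h | h <;> subst h <;> simp <;> omega

lemma path_facts : ∀ (L : List (ℕ × ℕ)) (a b c d : ℕ), L.Chain' IsStep →
    L.head? = some (a, b) → L.getLast? = some (c, d) →
    ((∀ v ∈ L, a ≤ v.1 ∧ v.1 ≤ c ∧ b ≤ v.2 ∧ v.2 ≤ d) ∧
      L.length + (a + b) = c + d + 1 ∧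
      ∀ s, a + b ≤ s → s ≤ c + d → ∃ p ∈ L, p.1 + p.2 = s)
  | [], a, b, c, d, _, hh, _ => by simp at hh
  | [x], a, b, c, d, _, hh, hl => by
      simp only [List.head?_cons, Option.some.injEq] at hh
      subst hh
      have hl' : ((a, b) : ℕ × ℕ) = (c, d) := by simpa using hl
      have hac : a = c := congrArg Prod.fst hl'
      have hbd : b = d := congrArg Prod.snd hl'
      subst hac; subst hbd
      refine ⟨?_, by simp only [List.length_singleton]; omega, ?_⟩
      · rintro v hv
        simp only [List.mem_singleton] at hv
        subst hv; omega
      · intro s hs1 hs2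
        exact ⟨(a, b), by simp, by simp; omega⟩
  | x :: y :: t, a, b, c, d, hc, hh, hl => by
      simp only [List.head?_cons, Option.some.injEq] at hh
      subst hh
      simp only [List.Chain', List.isChain_cons_cons] at hc
      rw [List.getLast?_cons_cons] at hl
      have hstep := hc.1
      have hxy := step_le hstep
      rw [Prod.le_def] at hxy
      have hsum := step_sum hstep
      simp only at hsum hxy
      obtain ⟨ihb, ihlen, ihsum⟩ :=
        path_facts (y :: t) y.1 y.2 c d hc.2 (by simp) hl
      have hy := ihb y (by simp)
      refine ⟨?_, ?_, ?_⟩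
      · intro v hv
        rcases List.mem_cons.mp hv with hv | hv
        · subst hv; simp only; omega
        · have := ihb v hv; omega
      · simp only [List.length_cons] at ihlen ⊢; omega
      · intro s hs1 hs2
        rcases Nat.eq_or_lt_of_le hs1 with hs | hs
        · exact ⟨(a, b), by simp, by simp; omega⟩
        · obtain ⟨p, hp, hps⟩ := ihsum s (by omega) hs2
          exact ⟨p, List.mem_cons_of_mem _ hp, hps⟩

lemma path_pairwise {L : List (ℕ × ℕ)} (h : L.Chain' IsStep) : L.Pairwise (· ≤ ·) :=
  List.isChain_iff_pairwise.mp (h.imp fun _ _ hs => step_le hs)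

lemma path_nodup {L : List (ℕ × ℕ)} (h : L.Chain' IsStep) : L.Nodup := by
  haveI : Trans (fun p q : ℕ × ℕ => p.1 + p.2 < q.1 + q.2)
      (fun p q : ℕ × ℕ => p.1 + p.2 < q.1 + q.2) (fun p q : ℕ × ℕ => p.1 + p.2 < q.1 + q.2) :=
    ⟨fun h1 h2 => by omega⟩
  have hpw : L.Pairwise (fun p q : ℕ × ℕ => p.1 + p.2 < q.1 + q.2) :=
    List.isChain_iff_pairwise.mp (h.imp fun _ _ hs => by have := step_sum hs; omega)
  exact hpw.imp fun {p q} hlt => by intro he; subst he; omega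

lemma path_face {m n : ℕ} {L : List (ℕ × ℕ)} (h : IsPath 1 1 m n L) :
    IsFace2 m n L.toFinset := by
  obtain ⟨hne, hh, hl, hc⟩ := h
  obtain ⟨hbounds, -, -⟩ := path_facts L 1 1 m n hc hh hl
  refine ⟨fun v hv => hbounds v (List.mem_toFinset.mp hv), ?_⟩
  intro p hp q hq hcon
  have hpw : L.Pairwise (fun x y : ℕ × ℕ => x ≤ y ∨ y ≤ x) :=
    (path_pairwise hc).imp fun h => Or.inl h
  have hsym : Symmetric (fun x y : ℕ × ℕ => x ≤ y ∨ y ≤ x) := fun x y h => h.symm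
  haveI : Std.Symm (fun x y : ℕ × ℕ => x ≤ y ∨ y ≤ x) := ⟨fun _ _ h => hsym h⟩
  by_cases hpq : p = q
  · subst hpq; omega
  · rcases hpw.forall (List.mem_toFinset.mp hp) (List.mem_toFinset.mp hq) hpq with
      h | h <;> rw [Prod.le_def] at h <;> omega

lemma path_max {m n : ℕ} {L : List (ℕ × ℕ)} (h : IsPath 1 1 m n L)
    {G : Finset (ℕ × ℕ)} (hG : IsFace2 m n G) (hsub : L.toFinset ⊆ G) :
    L.toFinset = G := by
  refine Finset.Subset.antisymm hsub fun v hv => ?_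
  obtain ⟨hne, hh, hl, hc⟩ := h
  obtain ⟨-, -, hsum⟩ := path_facts L 1 1 m n hc hh hl
  have hvb := hG.1 v hv
  obtain ⟨p, hp, hps⟩ := hsum (v.1 + v.2) (by omega) (by omega)
  have hpG : p ∈ G := hsub (List.mem_toFinset.mpr hp)
  rcases lt_trichotomy v.1 p.1 with hlt | heq | hlt
  · exact absurd ⟨hlt, by omega⟩ (hG.2 v hv p hpG)
  · have : v = p := Prod.ext heq (by omega)
    subst this; exact List.mem_toFinset.mpr hp
  · exact absurd ⟨hlt, by omega⟩ (hG.2 p hpG v hv)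

/- ## Constructing a path through any face -/

def seg (a b c d : ℕ) : List (ℕ × ℕ) :=
  if a < c then (a, b) :: seg (a + 1) b c d
  else if b < d then (a, b) :: seg a (b + 1) c d
  else [(a, b)]
termination_by (c - a) + (d - b)
decreasing_by all_goals omega

lemma path_cons {a b c d : ℕ} {p : ℕ × ℕ} {L : List (ℕ × ℕ)}
    (h : IsPath a b c d L) (hs : IsStep p (a, b)) : IsPath p.1 p.2 c d (p :: L) := by
  obtain ⟨hne, hh, hl, hc⟩ := h
  refine ⟨List.cons_ne_nil _ _, by simp, ?_, ?_⟩
  · cases L with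
    | nil => exact absurd rfl hne
    | cons x t => rw [List.getLast?_cons_cons]; exact hl
  · simp only [List.Chain', List.isChain_cons]
    refine ⟨fun y hy => ?_, hc⟩
    rw [hh] at hy
    simp only [Option.mem_some_iff] at hy
    subst hy; exact hs

lemma seg_path (a b c d : ℕ) (h1 : a ≤ c) (h2 : b ≤ d) :
    IsPath a b c d (seg a b c d) := by
  rw [seg]
  split_ifs with h3 h4
  · exact path_cons (p := (a, b)) (seg_path (a + 1) b c d h3 h2) (Or.inl rfl)
  · exact path_cons (p := (a, b)) (seg_path a (b + 1) c d h1 h4) (Or.inr rfl)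
  · have hac : a = c := by omega
    have hbd : b = d := by omega
    subst hac; subst hbd
    exact ⟨List.cons_ne_nil _ _, rfl, rfl, List.isChain_singleton _⟩
termination_by (c - a) + (d - b)
decreasing_by all_goals omega

lemma path_append {a b c d e f : ℕ} {L1 L2 : List (ℕ × ℕ)}
    (h1 : IsPath a b c d L1) (h2 : IsPath c d e f L2) :
    IsPath a b e f (L1 ++ L2.tail) := by
  obtain ⟨hne1, hh1, hl1, hc1⟩ := h1
  obtain ⟨hne2, hh2, hl2, hc2⟩ := h2
  cases L2 with
  | nil => exact absurd rfl hne2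
  | cons x t =>
    have hx : x = (c, d) := by simpa using hh2
    subst hx
    cases t with
    | nil =>
      have hcd : ((c, d) : ℕ × ℕ) = (e, f) := by simpa using hl2
      simp only [List.tail_cons, List.append_nil]
      exact ⟨hne1, hh1, hcd ▸ hl1, hc1⟩
    | cons y t' =>
      simp only [List.Chain', List.isChain_cons_cons] at hc2
      refine ⟨by simp [hne1], ?_, ?_, ?_⟩
      · rw [List.head?_append, hh1]; rfl
      · rw [List.tail_cons, List.getLast?_append]
        rw [List.getLast?_cons_cons] at hl2
        rw [hl2]; rfl
      · refine List.IsChain.append hc1 hc2.2 ?_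
        intro u hu w hw
        rw [hl1] at hu
        simp only [List.tail_cons, List.head?_cons, Option.mem_some_iff] at hu hw
        subst hu; subst hw
        exact hc2.1

def build : ℕ × ℕ → List (ℕ × ℕ) → List (ℕ × ℕ)
  | p, [] => [p]
  | p, q :: rest => seg p.1 p.2 q.1 q.2 ++ (build q rest).tail

lemma build_path : ∀ (l : List (ℕ × ℕ)) (p z : ℕ × ℕ), List.Chain (· ≤ ·) p l →
    (p :: l).getLast? = some z → IsPath p.1 p.2 z.1 z.2 (build p l)
  | [], p, z, _, hz => by
      have : p = z := by simpa using hz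
      subst this
      exact ⟨List.cons_ne_nil _ _, by simp [build], by simp [build], List.isChain_singleton _⟩
  | q :: rest, p, z, hc, hz => by
      simp only [List.Chain, List.isChain_cons_cons] at hc
      rw [List.getLast?_cons_cons] at hz
      have ih := build_path rest q z hc.2 hz
      have hle := hc.1
      rw [Prod.le_def] at hle
      exact path_append (seg_path p.1 p.2 q.1 q.2 hle.1 hle.2) ih

lemma build_mem : ∀ (l : List (ℕ × ℕ)) (p : ℕ × ℕ), List.Chain (· ≤ ·) p l →
    ∀ v ∈ p :: l, v ∈ build p l
  | [], p, _, v, hv => by simpa [build] using hv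
  | q :: rest, p, hc, v, hv => by
      simp only [List.Chain, List.isChain_cons_cons] at hc
      have hle := hc.1
      rw [Prod.le_def] at hle
      have hseg := seg_path p.1 p.2 q.1 q.2 hle.1 hle.2
      show v ∈ seg p.1 p.2 q.1 q.2 ++ (build q rest).tail
      rcases List.mem_cons.mp hv with hv | hv
      · subst hv
        exact List.mem_append_left _
          (List.mem_of_mem_head? (by rw [hseg.2.1]; rfl))
      · have hvb : v ∈ build q rest := build_mem rest q hc.2 v hv
        obtain ⟨z, hz⟩ : ∃ z, (q :: rest).getLast? = some z := by
          cases h : (q :: rest).getLast? with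
          | none => simp at h
          | some z => exact ⟨z, rfl⟩
        have hbp := build_path rest q z hc.2 hz
        cases hb : build q rest with
        | nil => rw [hb] at hvb; simp at hvb
        | cons w s =>
          have hw : w = q := by
            have h2 := hbp.2.1
            rw [hb] at h2
            simpa using h2
          subst hw
          rw [hb] at hvb
          rcases List.mem_cons.mp hvb with hv' | hv'
          · subst hv'
            exact List.mem_append_left _
              (List.mem_of_mem_getLast? (by rw [hseg.2.2.1]; rfl))
          · exact List.mem_append_right _ hv'

lemma chain_extend {m n : ℕ} : ∀ (l : List (ℕ × ℕ)) (p : ℕ × ℕ),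
    List.Chain' (· ≤ ·) (p :: l) → (∀ v ∈ l, v ≤ ((m, n) : ℕ × ℕ)) →
    p ≤ ((m, n) : ℕ × ℕ) → List.Chain (· ≤ ·) p (l ++ [((m, n) : ℕ × ℕ)])
  | [], p, _, _, hp => by
      exact List.chain_cons.mpr ⟨hp, List.Chain.nil⟩
  | q :: t, p, hc, hb, hp => by
      simp only [List.Chain', List.isChain_cons_cons] at hc
      exact List.chain_cons.mpr ⟨hc.1,
        chain_extend t q hc.2 (fun v hv => hb v (List.mem_cons_of_mem _ hv))
          (hb q List.mem_cons_self)⟩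

lemma le_of_face {m n : ℕ} {F : Finset (ℕ × ℕ)} (hF : IsFace2 m n F)
    {x y : ℕ × ℕ} (hx : x ∈ F) (hy : y ∈ F)
    (h : x.1 < y.1 ∨ (x.1 = y.1 ∧ x.2 ≤ y.2)) : x ≤ y := by
  have := hF.2 x hx y hy
  rw [Prod.le_def]
  omega

lemma chain_of_lerel {m n : ℕ} {F : Finset (ℕ × ℕ)} (hF : IsFace2 m n F) :
    ∀ (l : List (ℕ × ℕ)), (∀ v ∈ l, v ∈ F) →
    l.Chain' (fun a b : ℕ × ℕ => a.1 < b.1 ∨ (a.1 = b.1 ∧ a.2 ≤ b.2)) →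
    l.Chain' (· ≤ ·)
  | [], _, _ => List.isChain_nil
  | [x], _, _ => List.isChain_singleton _
  | x :: y :: t, hmem, hc => by
      simp only [List.Chain', List.isChain_cons_cons] at hc ⊢
      refine ⟨le_of_face hF (hmem x (by simp)) (hmem y (by simp)) hc.1,
        chain_of_lerel hF (y :: t) (fun v hv => hmem v (List.mem_cons_of_mem _ hv)) hc.2⟩

lemma face_sub_path {m n : ℕ} (hm : 1 ≤ m) (hn : 1 ≤ n) {F : Finset (ℕ × ℕ)}
    (hF : IsFace2 m n F) : ∃ L, IsPath 1 1 m n L ∧ ∀ v ∈ F, v ∈ L := by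
  classical
  set le : ℕ × ℕ → ℕ × ℕ → Bool :=
    fun p q => decide (p.1 < q.1 ∨ (p.1 = q.1 ∧ p.2 ≤ q.2)) with hle
  set l : List (ℕ × ℕ) := F.toList.mergeSort le with hldef
  have hperm := List.mergeSort_perm F.toList le
  have hmem : ∀ v, v ∈ l ↔ v ∈ F := by
    intro v
    rw [hldef, hperm.mem_iff, Finset.mem_toList]
  have hsorted : l.Pairwise (fun a b => le a b = true) :=
    List.pairwise_mergeSort (le := le)
      (fun a b c h1 h2 => by
        simp only [hle, decide_eq_true_eq] at h1 h2 ⊢; omega)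
      (fun a b => by
        simp only [hle, Bool.or_eq_true, decide_eq_true_eq]; omega)
      F.toList
  have hlerel : l.Chain' (fun a b : ℕ × ℕ => a.1 < b.1 ∨ (a.1 = b.1 ∧ a.2 ≤ b.2)) :=
    hsorted.isChain.imp fun a b h => by
      simpa only [hle, decide_eq_true_eq] using h
  have hchain : l.Chain' (· ≤ ·) :=
    chain_of_lerel hF l (fun v hv => (hmem v).mp hv) hlerel
  have hbig : ∀ v ∈ l, ((1, 1) : ℕ × ℕ) ≤ v ∧ v ≤ ((m, n) : ℕ × ℕ) := by
    intro v hv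
    have := hF.1 v ((hmem v).mp hv)
    rw [Prod.le_def, Prod.le_def]
    omega
  have hch0 : List.Chain' (· ≤ ·) (((1, 1) : ℕ × ℕ) :: l) :=
    List.isChain_cons.mpr
      ⟨fun y hy => (hbig y (List.mem_of_mem_head? hy)).1, hchain⟩
  have hch : List.Chain (· ≤ ·) ((1, 1) : ℕ × ℕ) (l ++ [((m, n) : ℕ × ℕ)]) :=
    chain_extend l (1, 1) hch0 (fun v hv => (hbig v hv).2)
      (by rw [Prod.le_def]; exact ⟨hm, hn⟩)
  have hz : ((((1, 1) : ℕ × ℕ)) :: (l ++ [((m, n) : ℕ × ℕ)])).getLast? = some (m, n) := by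
    rw [← List.cons_append]
    exact List.getLast?_concat
  refine ⟨build (1, 1) (l ++ [((m, n) : ℕ × ℕ)]), ?_, ?_⟩
  · exact build_path _ (1, 1) (m, n) hch hz
  · intro v hv
    exact build_mem _ (1, 1) hch v
      (List.mem_cons_of_mem _ (List.mem_append_left _ ((hmem v).mpr hv)))

theorem delta2_facets (m n : ℕ) (hm : 1 ≤ m) (hn : 1 ≤ n) :
    (∀ F : Finset (ℕ × ℕ),
        IsFacet2 m n F ↔ ∃ L : List (ℕ × ℕ), IsPath 1 1 m n L ∧ F = L.toFinset) ∧
    (∀ F : Finset (ℕ × ℕ), IsFacet2 m n F → F.card = m + n - 1) := by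
  have key : ∀ F : Finset (ℕ × ℕ),
      IsFacet2 m n F ↔ ∃ L : List (ℕ × ℕ), IsPath 1 1 m n L ∧ F = L.toFinset := by
    intro F
    constructor
    · intro hFac
      obtain ⟨L, hL, hmem⟩ := face_sub_path hm hn hFac.1
      exact ⟨L, hL, hFac.2 L.toFinset (path_face hL)
        (fun v hv => List.mem_toFinset.mpr (hmem v hv))⟩
    · rintro ⟨L, hL, rfl⟩
      exact ⟨path_face hL, fun G hG hsub => path_max hL hG hsub⟩
  refine ⟨key, ?_⟩
  intro F hFac
  obtain ⟨L, hL, rfl⟩ := (key F).mp hFac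
  obtain ⟨hne, hh, hl, hc⟩ := hL
  obtain ⟨-, hlen, -⟩ := path_facts L 1 1 m n hc hh hl
  rw [List.toFinset_card_of_nodup (path_nodup hc)]
  omega
end
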